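/- There is a constant c = c(n) > 0 (one may take c = 4^{-n} n^{-1/2}) such that for every cube Q contained in Ω, the Euclidean diameter of f_ν(Q) is at least c times the d_ν-diameter of Q. -/

import Mathlib

open MeasureTheory Set

noncomputable section

/-- Euclidean space `ℝⁿ`. -/
abbrev Euc (n : ℕ) := EuclideanSpace ℝ (Fin n)

/-- The space of affine hyperplanes in `ℝⁿ`, encoded as pairs `(v, c)` with `‖v‖ = 1`,
representing the hyperplane `{x : ⟪x, v⟫ = c}`. -/
abbrev Hyp (n : ℕ) := {p : Euc n × ℝ // ‖p.1‖ = 1}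

/-- The hyperplane determined by `H`, as a subset of `ℝⁿ`. -/
def hset {n : ℕ} (H : Hyp n) : Set (Euc n) := {x | (inner ℝ x H.1.1 : ℝ) = H.1.2}

/-- `meets A = π A`: the set of hyperplanes intersecting `A`. -/
def meets {n : ℕ} (A : Set (Euc n)) : Set (Hyp n) := {H | (hset H ∩ A).Nonempty}

/-- The unit normal of `H` pointing out of the halfspace containing the basepoint `o`. -/
def nrm {n : ℕ} (o : Euc n) (H : Hyp n) : Euc n :=
  if (inner ℝ o H.1.1 : ℝ) < H.1.2 then H.1.1 else -H.1.1

/-- `fnu ν o x = ∫_{π[o,x]} n(H) dν(H)`. -/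
def fnu {n : ℕ} (ν : Measure (Hyp n)) (o : Euc n) (x : Euc n) : Euc n :=
  ∫ H in meets (segment ℝ o x), nrm o H ∂ν

/-- `sin α(v, H) = |⟪v, n(H)⟫| / |v|`, the sine of the angle between the line of `v`
and the hyperplane `H`. -/
def sinA {n : ℕ} (v : Euc n) (H : Hyp n) : ℝ := |(inner ℝ v H.1.1 : ℝ)| / ‖v‖

/-- The axis-parallel closed cube with lower corner `b` and edge length `a`. -/
def cube {n : ℕ} (b : Euc n) (a : ℝ) : Set (Euc n) :=
  {z | ∀ i, z i ∈ Icc (b i) (b i + a)}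

/-- `x` is a vertex of the cube `cube b a`. -/
def IsVertex {n : ℕ} (b : Euc n) (a : ℝ) (x : Euc n) : Prop :=
  ∀ i, x i = b i ∨ x i = b i + a

/-- The hyperplane `H` (strictly) separates the points `x` and `y`. -/
def Separates {n : ℕ} (H : Hyp n) (x y : Euc n) : Prop :=
  ((inner ℝ x H.1.1 : ℝ) - H.1.2) * ((inner ℝ y H.1.1 : ℝ) - H.1.2) < 0

namespace Aux14
variable {n : ℕ}

lemma mem_meets_segment' {H : Hyp n} {x y : Euc n} :
    H ∈ meets (segment ℝ x y) ↔
      ((inner ℝ x H.1.1 : ℝ) - H.1.2) * ((inner ℝ y H.1.1 : ℝ) - H.1.2) ≤ 0 := by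
  obtain ⟨⟨v, c⟩, hv⟩ := H
  simp only [meets, hset, Set.mem_setOf_eq]
  constructor
  · rintro ⟨z, hz1, t1, t2, ht1, ht2, hsum, rfl⟩
    simp only [Set.mem_setOf_eq] at hz1
    rw [inner_add_left, real_inner_smul_left, real_inner_smul_left] at hz1
    by_contra hcon
    push_neg at hcon
    have key : t1 * ((inner ℝ x v : ℝ) - c) + t2 * ((inner ℝ y v : ℝ) - c) = 0 := by
      linear_combination hz1 - c * hsum
    rcases mul_pos_iff.mp hcon with ⟨hp, hq⟩ | ⟨hp, hq⟩
    · have hA : 0 ≤ t1 * ((inner ℝ x v : ℝ) - c) := mul_nonneg ht1 hp.le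
      have hB : 0 ≤ t2 * ((inner ℝ y v : ℝ) - c) := mul_nonneg ht2 hq.le
      have e1 : t1 * ((inner ℝ x v : ℝ) - c) = 0 := by linarith
      have e2 : t2 * ((inner ℝ y v : ℝ) - c) = 0 := by linarith
      rcases mul_eq_zero.mp e1 with h | h
      · rcases mul_eq_zero.mp e2 with h' | h' <;> [linarith; linarith]
      · linarith
    · have hA : t1 * ((inner ℝ x v : ℝ) - c) ≤ 0 := mul_nonpos_of_nonneg_of_nonpos ht1 hp.le
      have hB : t2 * ((inner ℝ y v : ℝ) - c) ≤ 0 := mul_nonpos_of_nonneg_of_nonpos ht2 hq.le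
      have e1 : t1 * ((inner ℝ x v : ℝ) - c) = 0 := by linarith
      have e2 : t2 * ((inner ℝ y v : ℝ) - c) = 0 := by linarith
      rcases mul_eq_zero.mp e1 with h | h
      · rcases mul_eq_zero.mp e2 with h' | h' <;> [linarith; linarith]
      · linarith
  · intro h
    set gx := (inner ℝ x v : ℝ) - c with hgx
    set gy := (inner ℝ y v : ℝ) - c with hgy
    rcases eq_or_ne gx 0 with h0 | h0
    · exact ⟨x, by show (inner ℝ x v : ℝ) = c; linarith [h0, hgx.symm], left_mem_segment ℝ x y⟩
    rcases eq_or_ne gy 0 with h1 | h1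
    · exact ⟨y, by show (inner ℝ y v : ℝ) = c; linarith [h1, hgy.symm], right_mem_segment ℝ x y⟩
    have hlt : gx * gy < 0 := h.lt_of_ne (mul_ne_zero h0 h1)
    have hne : gx - gy ≠ 0 := by
      rcases mul_neg_iff.mp hlt with ⟨hp, hq⟩ | ⟨hp, hq⟩ <;> intro hc <;> nlinarith
    set t := gx / (gx - gy) with htdef
    have hkey : t * (gx - gy) = gx := by rw [htdef]; field_simp
    have h0t : 0 ≤ t := by
      by_contra hc; push_neg at hc
      rcases mul_neg_iff.mp hlt with ⟨hp, hq⟩ | ⟨hp, hq⟩ <;> nlinarith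
    have h1t : t ≤ 1 := by
      by_contra hc; push_neg at hc
      rcases mul_neg_iff.mp hlt with ⟨hp, hq⟩ | ⟨hp, hq⟩ <;> nlinarith
    refine ⟨(1 - t) • x + t • y, ?_, 1 - t, t, by linarith, h0t, by ring, rfl⟩
    show (inner ℝ ((1 - t) • x + t • y) v : ℝ) = c
    rw [inner_add_left, real_inner_smul_left, real_inner_smul_left]
    nlinarith [hkey]

lemma mem_meets_singleton' {H : Hyp n} {x : Euc n} :
    H ∈ meets {x} ↔ (inner ℝ x H.1.1 : ℝ) = H.1.2 := by
  simp [meets, hset, Set.inter_singleton_nonempty]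

instance : OpensMeasurableSpace (Hyp n) :=
  Subtype.opensMeasurableSpace {p : Euc n × ℝ | ‖p.1‖ = 1}

lemma cont_inner (x : Euc n) : Continuous fun H : Hyp n => (inner ℝ x H.1.1 : ℝ) :=
  Continuous.inner continuous_const (continuous_fst.comp continuous_subtype_val)

lemma cont_c : Continuous fun H : Hyp n => H.1.2 :=
  continuous_snd.comp continuous_subtype_val

lemma cont_coord (i : Fin n) : Continuous fun H : Hyp n => H.1.1 i :=
  (EuclideanSpace.proj i).continuous.comp (continuous_fst.comp continuous_subtype_val)

lemma meas_meets_seg (x y : Euc n) : MeasurableSet (meets (segment ℝ x y)) := by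
  have h : meets (segment ℝ x y) =
      {H : Hyp n | ((inner ℝ x H.1.1 : ℝ) - H.1.2) * ((inner ℝ y H.1.1 : ℝ) - H.1.2) ≤ 0} :=
    Set.ext fun H => mem_meets_segment'
  rw [h]
  exact measurableSet_le ((((cont_inner x).sub cont_c).mul ((cont_inner y).sub cont_c)).measurable)
    measurable_const

lemma meas_meets_single (x : Euc n) : MeasurableSet (meets ({x} : Set (Euc n))) := by
  have h : meets ({x} : Set (Euc n)) = {H : Hyp n | (inner ℝ x H.1.1 : ℝ) = H.1.2} :=
    Set.ext fun H => mem_meets_singleton'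
  rw [h]
  exact measurableSet_eq_fun (cont_inner x).measurable cont_c.measurable

lemma meas_sep (x y : Euc n) : MeasurableSet {H : Hyp n | Separates H x y} :=
  measurableSet_lt ((((cont_inner x).sub cont_c).mul ((cont_inner y).sub cont_c)).measurable)
    measurable_const

lemma meas_coordbd (i : Fin n) (r : ℝ) : MeasurableSet {H : Hyp n | r ≤ |H.1.1 i|} :=
  measurableSet_le measurable_const (cont_coord i).abs.measurable

lemma measurable_nrm (o : Euc n) : Measurable (nrm o : Hyp n → Euc n) := by
  unfold nrm
  exact Measurable.ite (measurableSet_lt (cont_inner o).measurable cont_c.measurable)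
    (continuous_fst.comp continuous_subtype_val).measurable
    (continuous_fst.comp continuous_subtype_val).neg.measurable

lemma norm_nrm (o : Euc n) (H : Hyp n) : ‖nrm o H‖ = 1 := by
  unfold nrm; split <;> simp [H.2]

lemma abs_coord_le_norm (x : Euc n) (i : Fin n) : |x i| ≤ ‖x‖ := by
  rw [EuclideanSpace.norm_eq]
  have h1 : |x i| = Real.sqrt (‖x i‖ ^ 2) := by
    rw [Real.sqrt_sq_eq_abs]; simp
  rw [h1]
  exact Real.sqrt_le_sqrt
    (Finset.single_le_sum (f := fun j => ‖x j‖ ^ 2) (fun j _ => by positivity) (Finset.mem_univ i))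

lemma inner_sub_sum (x y w : Euc n) :
    (inner ℝ x w : ℝ) - (inner ℝ y w : ℝ) = ∑ j, (x j - y j) * w j := by
  simp only [PiLp.inner_apply, RCLike.inner_apply, conj_trivial, ← Finset.sum_sub_distrib]
  congr 1; funext j; ring

def upd (x : Euc n) (j : Fin n) (r : ℝ) : Euc n := WithLp.toLp 2 (Function.update x j r)

lemma upd_apply (x : Euc n) (j k : Fin n) (r : ℝ) :
    upd x j r k = if k = j then r else x k := by
  show Function.update x j r k = _
  simp [Function.update_apply]

lemma inner_update (x v : Euc n) (j : Fin n) (r : ℝ) :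
    (inner ℝ (upd x j r) v : ℝ) = (inner ℝ x v : ℝ) + (r - x j) * v j := by
  have h := inner_sub_sum (upd x j r) x v
  rw [Finset.sum_eq_single j] at h
  · rw [upd_apply, if_pos rfl] at h
    linarith
  · intro k _ hk
    rw [upd_apply]
    simp [hk]
  · intro hk; exact absurd (Finset.mem_univ j) hk

def vx (b : Euc n) (a : ℝ) (s : Fin n → Bool) : Euc n := WithLp.toLp 2 (fun j => b j + if s j then a else 0)

lemma vx_mem_cube {b : Euc n} {a : ℝ} (ha : 0 ≤ a) (s : Fin n → Bool) : vx b a s ∈ cube b a := by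
  intro j
  show b j + _ ∈ _
  constructor
  · by_cases h : s j <;> simp [h, ha]
  · by_cases h : s j <;> simp [h, ha]

lemma convex_cube (b : Euc n) (a : ℝ) : Convex ℝ (cube b a) := by
  intro x hx y hy t1 t2 ht1 ht2 hsum
  intro j
  have hxa := hx j; have hya := hy j
  have happ : (t1 • x + t2 • y) j = t1 * x j + t2 * y j := by
    simp [PiLp.add_apply, PiLp.smul_apply, smul_eq_mul]
  rw [happ]
  have hb : t1 * b j + t2 * b j = b j := by rw [← add_mul, hsum, one_mul]
  have hb' : t1 * (b j + a) + t2 * (b j + a) = b j + a := by rw [← add_mul, hsum, one_mul]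
  constructor
  · have e1 := mul_le_mul_of_nonneg_left hxa.1 ht1
    have e2 := mul_le_mul_of_nonneg_left hya.1 ht2
    linarith
  · have e1 := mul_le_mul_of_nonneg_left hxa.2 ht1
    have e2 := mul_le_mul_of_nonneg_left hya.2 ht2
    linarith


lemma divt (hn : 0 < n) {g : (Fin n → Bool) → ℝ} {B : ℝ}
    (hstep : ∀ s j t, |g (Function.update s j t) - g s| ≤ B) :
    ∀ (k : ℕ) (s1 s2 : Fin n → Bool),
      (Finset.univ.filter fun j => s1 j ≠ s2 j).card ≤ k →
      g s1 < 0 → B < g s2 → ∃ s, 0 ≤ g s ∧ g s ≤ B := by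
  have hB : 0 ≤ B := by
    have := hstep (fun _ => false) ⟨0, hn⟩ false
    rw [Function.update_eq_self] at this
    simpa using this
  intro k
  induction k with
  | zero =>
    intro s1 s2 hc h1 h2
    have he : s1 = s2 := by
      ext j
      by_contra hj
      have : j ∈ Finset.univ.filter fun j => s1 j ≠ s2 j := by
        simp [hj]
      have := Finset.card_pos.mpr ⟨j, this⟩
      omega
    rw [he] at h1; linarith
  | succ k ih =>
    intro s1 s2 hc h1 h2
    by_cases he : s1 = s2
    · rw [he] at h1; linarith
    · obtain ⟨j, hj⟩ : ∃ j, s1 j ≠ s2 j := by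
        by_contra hno; push_neg at hno
        exact he (funext hno)
      set s1' := Function.update s1 j (s2 j) with hs1'
      rcases lt_or_ge (g s1') 0 with h' | h'
      · refine ih s1' s2 ?_ h' h2
        have hset : (Finset.univ.filter fun j' => s1' j' ≠ s2 j') =
            (Finset.univ.filter fun j' => s1 j' ≠ s2 j').erase j := by
          ext k'
          simp only [Finset.mem_filter, Finset.mem_erase, Finset.mem_univ, true_and]
          by_cases hk : k' = j
          · subst hk; simp [hs1', Function.update_self]
          · simp [hs1', Function.update_of_ne hk, hk]
        rw [hset]
        have hjm : j ∈ Finset.univ.filter fun j' => s1 j' ≠ s2 j' := by simp [hj]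
        rw [Finset.card_erase_of_mem hjm]
        omega
      · rcases le_or_gt (g s1') B with h'' | h''
        · exact ⟨s1', h', h''⟩
        · exfalso
          have := abs_le.mp (hstep s1 j (s2 j))
          rw [← hs1'] at this
          linarith [this.2]

lemma aux_exists (b : Euc n) (a : ℝ) (ha : 0 < a) (hn : 0 < n) (v : Euc n) (c : ℝ) (i : Fin n)
    (hvi : 0 < v i) (hmax : ∀ j, |v j| ≤ v i)
    (z : Euc n) (hz : z ∈ cube b a) (hzc : (inner ℝ z v : ℝ) = c)
    (hvert : ∀ s : Fin n → Bool, (inner ℝ (vx b a s) v : ℝ) ≠ c) :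
    ∃ s : Fin n → Bool,
      ((inner ℝ (vx b a (Function.update s i false)) v : ℝ) - c) *
      ((inner ℝ (vx b a (Function.update s i true)) v : ℝ) - c) < 0 := by
  set ψ : (Fin n → Bool) → ℝ := fun s => c - (inner ℝ (vx b a (Function.update s i false)) v : ℝ)
    with hψ
  -- vx of updated-true vertex
  have hvx_eq : ∀ s : Fin n → Bool,
      vx b a (Function.update s i true) = upd (vx b a (Function.update s i false)) i (b i + a) := by
    intro s
    ext j
    rw [upd_apply]
    by_cases hij : j = i
    · subst hij; simp [vx, Function.update_self]
    · simp [vx, Function.update_of_ne hij, hij]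
  have hrel : ∀ s : Fin n → Bool,
      (inner ℝ (vx b a (Function.update s i true)) v : ℝ)
        = (inner ℝ (vx b a (Function.update s i false)) v : ℝ) + a * v i := by
    intro s
    rw [hvx_eq s, inner_update]
    have : vx b a (Function.update s i false) i = b i := by
      simp [vx, Function.update_self]
    rw [this]; ring
  -- main case split
  by_cases hex : ∃ s, 0 ≤ ψ s ∧ ψ s ≤ a * v i
  · obtain ⟨s, hs0, hs1⟩ := hex
    refine ⟨s, ?_⟩
    have hne0 : ψ s ≠ 0 := by
      intro h0
      exact hvert (Function.update s i false) (by rw [hψ] at h0; simp only at h0; linarith)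
    have hnea : ψ s ≠ a * v i := by
      intro h0
      refine hvert (Function.update s i true) ?_
      rw [hrel s]
      rw [hψ] at h0; simp only at h0; linarith
    have h1 : 0 < ψ s := hs0.lt_of_ne (Ne.symm hne0)
    have h2 : ψ s < a * v i := hs1.lt_of_ne hnea
    rw [hrel s]
    have e1 : (inner ℝ (vx b a (Function.update s i false)) v : ℝ) - c = -ψ s := by
      rw [hψ]; simp only; ring
    nlinarith [e1]
  · exfalso
    push_neg at hex
    -- step bound
    have hstep : ∀ s j t, |ψ (Function.update s j t) - ψ s| ≤ a * v i := by
      intro s j t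
      by_cases hij : j = i
      · rw [hij, hψ]
        simp only
        rw [Function.update_idem]
        simp only [sub_self, abs_zero]
        exact mul_nonneg ha.le hvi.le
      · have hcomm : Function.update (Function.update s j t) i false =
            Function.update (Function.update s i false) j t :=
          Function.update_comm hij t false s
        have hvv : vx b a (Function.update (Function.update s j t) i false) =
            upd (vx b a (Function.update s i false)) j (b j + if t then a else 0) := by
          rw [hcomm]
          ext k
          rw [upd_apply]
          by_cases hkj : k = j
          · subst hkj; simp [vx, Function.update_of_ne hij, Function.update_self]
          · simp [vx, Function.update_apply, hkj]
        have : ψ (Function.update s j t) - ψ s =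
            -(((b j + if t then a else 0) - vx b a (Function.update s i false) j) * v j) := by
          rw [hψ]; simp only
          rw [hvv, inner_update]
          ring
        rw [this, abs_neg, abs_mul]
        have hvxj : vx b a (Function.update s i false) j = b j + if s j then a else 0 := by
          simp [vx, Function.update_apply, hij]
        rw [hvxj]
        have h1 : |(b j + if t then a else 0) - (b j + if s j then a else 0)| ≤ a := by
          rcases t <;> rcases hsj : s j <;> simp [abs_of_nonneg ha.le, ha.le]
        calc |(b j + if t then a else 0) - (b j + if s j then a else 0)| * |v j|
            ≤ a * |v j| := by
              apply mul_le_mul_of_nonneg_right h1 (abs_nonneg _)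
          _ ≤ a * v i := by
              apply mul_le_mul_of_nonneg_left (hmax j) ha.le
    -- the point u and t
    set t0 : ℝ := z i - b i with ht0
    have ht00 : 0 ≤ t0 := by have := (hz i).1; rw [ht0]; linarith
    have ht01 : t0 ≤ a := by have := (hz i).2; rw [ht0]; linarith
    have hu : (inner ℝ (upd z i (b i)) v : ℝ) = c - t0 * v i := by
      rw [inner_update, hzc]; rw [ht0]; ring
    set sm : Fin n → Bool := fun j => decide (0 < v j) with hsm
    set sp : Fin n → Bool := fun j => decide (v j < 0) with hsp
    have hgap : ∀ (s : Fin n → Bool),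
        ψ s - t0 * v i = ∑ j, ((upd z i (b i)) j - vx b a (Function.update s i false) j) * v j := by
      intro s
      rw [← inner_sub_sum]
      rw [hu, hψ]; simp only; ring
    have hcoordvx : ∀ (s : Fin n → Bool) (j : Fin n), j ≠ i →
        vx b a (Function.update s i false) j = b j + if s j then a else 0 := by
      intro s j hij
      simp [vx, Function.update_apply, hij]
    have hcoordvxi : ∀ (s : Fin n → Bool),
        vx b a (Function.update s i false) i = b i := by
      intro s
      simp [vx, Function.update_self]
    have hsp_ge : t0 * v i ≤ ψ sp := by
      have h := hgap sp
      have hpos : 0 ≤ ∑ j, ((upd z i (b i)) j - vx b a (Function.update sp i false) j) * v j := by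
        apply Finset.sum_nonneg
        intro j _
        by_cases hij : j = i
        · rw [hij, upd_apply, if_pos rfl, hcoordvxi]
          simp
        · rw [upd_apply, if_neg hij, hcoordvx sp j hij, hsp]
          simp only [decide_eq_true_eq]
          by_cases hv : v j < 0
          · rw [if_pos hv]
            have h1 := (hz j).2
            nlinarith
          · rw [if_neg hv]
            push_neg at hv
            have h1 := (hz j).1
            nlinarith
      linarith
    have hsm_le : ψ sm ≤ t0 * v i := by
      have h := hgap sm
      have hneg : (∑ j, ((upd z i (b i)) j - vx b a (Function.update sm i false) j) * v j) ≤ 0 := by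
        apply Finset.sum_nonpos
        intro j _
        by_cases hij : j = i
        · rw [hij, upd_apply, if_pos rfl, hcoordvxi]
          simp
        · rw [upd_apply, if_neg hij, hcoordvx sm j hij, hsm]
          simp only [decide_eq_true_eq]
          by_cases hv : 0 < v j
          · rw [if_pos hv]
            have h1 := (hz j).2
            nlinarith
          · rw [if_neg hv]
            push_neg at hv
            have h1 := (hz j).1
            nlinarith
      linarith
    have htvi0 : 0 ≤ t0 * v i := mul_nonneg ht00 hvi.le
    have htvia : t0 * v i ≤ a * v i := mul_le_mul_of_nonneg_right ht01 hvi.le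
    have hsmneg : ψ sm < 0 := by
      by_contra hcon
      push_neg at hcon
      have := hex sm hcon
      linarith
    have hsppos : a * v i < ψ sp := hex sp (by linarith)
    obtain ⟨s, hgs0, hgs1⟩ := divt hn hstep n sm sp
      (by
        calc (Finset.univ.filter fun j => sm j ≠ sp j).card
            ≤ Finset.univ.card := Finset.card_filter_le _ _
          _ = n := by simp)
      hsmneg hsppos
    exact absurd (hex s hgs0) (by linarith)


lemma cov (b : Euc n) (a : ℝ) (ha : 0 < a) (hn : 0 < n) (H : Hyp n)
    (z : Euc n) (hz : z ∈ cube b a) (hzc : (inner ℝ z H.1.1 : ℝ) = H.1.2)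
    (hvert : ∀ s : Fin n → Bool, (inner ℝ (vx b a s) H.1.1 : ℝ) ≠ H.1.2) :
    ∃ (i : Fin n) (s : Fin n → Bool), 1 / Real.sqrt n ≤ |H.1.1 i| ∧
      Separates H (vx b a (Function.update s i false)) (vx b a (Function.update s i true)) := by
  set v := H.1.1 with hv
  set c := H.1.2 with hc
  obtain ⟨i, _, hmax⟩ := Finset.exists_max_image Finset.univ (fun i => |v i|)
    ⟨⟨0, hn⟩, Finset.mem_univ _⟩
  have hmax' : ∀ j, |v j| ≤ |v i| := fun j => hmax j (Finset.mem_univ j)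
  -- |v i| ≥ 1/√n
  have hnorm : (∑ j, v j * v j) = 1 := by
    have h1 : (inner ℝ v v : ℝ) = 1 := by
      rw [real_inner_self_eq_norm_sq]
      rw [show ‖v‖ = 1 from H.2]; norm_num
    rw [← h1]
    simp only [PiLp.inner_apply, RCLike.inner_apply, conj_trivial]
  have hsum_le : (1 : ℝ) ≤ n * |v i| ^ 2 := by
    have h2 : (∑ j, v j * v j) ≤ ∑ _j : Fin n, |v i| ^ 2 := by
      apply Finset.sum_le_sum
      intro j _
      have := hmax' j
      nlinarith [abs_nonneg (v j), sq_abs (v j)]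
    rw [hnorm] at h2
    simpa using h2
  have hn1 : (1 : ℝ) ≤ n := by exact_mod_cast hn
  have hsq : Real.sqrt n > 0 := Real.sqrt_pos.mpr (by positivity)
  have hvibd : 1 / Real.sqrt n ≤ |v i| := by
    rw [div_le_iff₀ hsq]
    nlinarith [Real.sq_sqrt (by positivity : (0:ℝ) ≤ (n:ℝ)),
      mul_nonneg (abs_nonneg (v i)) (Real.sqrt_nonneg (n:ℝ)), hsum_le]
  have hvine : v i ≠ 0 := by
    intro h0
    rw [h0] at hvibd
    simp at hvibd
    nlinarith [hsq]
  rcases hvine.lt_or_gt with hneg | hpos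
  · -- apply aux to -v, -c
    obtain ⟨s, hs⟩ := aux_exists b a ha hn (-v) (-c) i (by simpa using hneg)
      (fun j => by
        have : |(-v) j| = |v j| := by simp [PiLp.neg_apply]
        rw [this]
        have : (-v) i = -(v i) := by simp [PiLp.neg_apply]
        rw [this, ← abs_of_pos (by linarith : 0 < -(v i))]
        simpa using hmax' j)
      z hz (by rw [inner_neg_right, hzc])
      (fun s hcon => hvert s (by
        rw [inner_neg_right] at hcon
        linarith [hcon]))
    refine ⟨i, s, hvibd, ?_⟩
    rw [inner_neg_right, inner_neg_right] at hs
    show ((inner ℝ (vx b a (Function.update s i false)) v : ℝ) - c) *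
        ((inner ℝ (vx b a (Function.update s i true)) v : ℝ) - c) < 0
    nlinarith [hs]
  · obtain ⟨s, hs⟩ := aux_exists b a ha hn v c i hpos
      (fun j => by rw [← abs_of_pos hpos]; exact hmax' j)
      z hz hzc hvert
    exact ⟨i, s, hvibd, hs⟩


lemma nrm_coord (o : Euc n) (H : Hyp n) (i : Fin n) :
    (nrm o H) i = if (inner ℝ o H.1.1 : ℝ) < H.1.2 then H.1.1 i else -(H.1.1 i) := by
  unfold nrm
  split
  · rfl
  · rfl

set_option maxHeartbeats 2000000 in
lemma sgn (o w0 w1 : Euc n) (a : ℝ) (ha : 0 < a) (i : Fin n) (H : Hyp n)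
    (hrel : (inner ℝ w1 H.1.1 : ℝ) = inner ℝ w0 H.1.1 + a * H.1.1 i)
    (hno : (inner ℝ o H.1.1 : ℝ) ≠ H.1.2) (hn0 : (inner ℝ w0 H.1.1 : ℝ) ≠ H.1.2)
    (hn1 : (inner ℝ w1 H.1.1 : ℝ) ≠ H.1.2) :
    (H ∈ meets (segment ℝ o w1) \ meets (segment ℝ o w0) → (nrm o H) i = |H.1.1 i|) ∧
    (H ∈ meets (segment ℝ o w0) \ meets (segment ℝ o w1) → (nrm o H) i = -|H.1.1 i|) ∧
    (Separates H w0 w1 →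
      H ∈ (meets (segment ℝ o w1) \ meets (segment ℝ o w0)) ∪
          (meets (segment ℝ o w0) \ meets (segment ℝ o w1))) := by
  set v := H.1.1 with hv
  set c := H.1.2 with hc
  set go := (inner ℝ o v : ℝ) - c with hgo
  set g0 := (inner ℝ w0 v : ℝ) - c with hg0
  set g1 := (inner ℝ w1 v : ℝ) - c with hg1
  have hgone : go ≠ 0 := sub_ne_zero_of_ne hno
  have hg0ne : g0 ≠ 0 := sub_ne_zero_of_ne hn0
  have hg1ne : g1 ≠ 0 := sub_ne_zero_of_ne hn1
  have hrel' : g1 = g0 + a * v i := by rw [hg1, hg0, hrel]; ring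
  refine ⟨?_, ?_, ?_⟩
  · rintro ⟨hB, hA⟩
    rw [mem_meets_segment'] at hB
    rw [mem_meets_segment'] at hA
    rw [← hgo, ← hg1] at hB
    push_neg at hA
    rw [← hgo, ← hg0] at hA
    rw [nrm_coord]
    rcases hgone.lt_or_gt with hlt | hlt
    · rw [if_pos (by rw [← sub_neg]; exact hlt)]
      have h1 : 0 < g1 := by
        rcases hg1ne.lt_or_gt with h | h
        · exfalso; nlinarith
        · exact h
      have h0 : g0 < 0 := by
        rcases hg0ne.lt_or_gt with h | h
        · exact h
        · exfalso; nlinarith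
      have : 0 < v i := by nlinarith
      rw [abs_of_pos this]
    · rw [if_neg (by rw [not_lt, ← sub_nonneg]; exact hlt.le)]
      have h1 : g1 < 0 := by
        rcases hg1ne.lt_or_gt with h | h
        · exact h
        · exfalso; nlinarith
      have h0 : 0 < g0 := by
        rcases hg0ne.lt_or_gt with h | h
        · exfalso; nlinarith
        · exact h
      have : v i < 0 := by nlinarith
      rw [abs_of_neg this]
  · rintro ⟨hA, hB⟩
    rw [mem_meets_segment'] at hB
    rw [mem_meets_segment'] at hA
    rw [← hgo, ← hg0] at hA
    push_neg at hB
    rw [← hgo, ← hg1] at hB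
    rw [nrm_coord]
    rcases hgone.lt_or_gt with hlt | hlt
    · rw [if_pos (by rw [← sub_neg]; exact hlt)]
      have h0 : 0 < g0 := by
        rcases hg0ne.lt_or_gt with h | h
        · exfalso; nlinarith
        · exact h
      have h1 : g1 < 0 := by
        rcases hg1ne.lt_or_gt with h | h
        · exact h
        · exfalso; nlinarith
      have : v i < 0 := by nlinarith
      rw [abs_of_neg this]; ring
    · rw [if_neg (by rw [not_lt, ← sub_nonneg]; exact hlt.le)]
      have h0 : g0 < 0 := by
        rcases hg0ne.lt_or_gt with h | h
        · exact h
        · exfalso; nlinarith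
      have h1 : 0 < g1 := by
        rcases hg1ne.lt_or_gt with h | h
        · exfalso; nlinarith
        · exact h
      have : 0 < v i := by nlinarith
      rw [abs_of_pos this]
  · intro hsep
    have hsep' : g0 * g1 < 0 := hsep
    rcases hgone.lt_or_gt with hlt | hlt
    · rcases mul_neg_iff.mp hsep' with ⟨hp, hq⟩ | ⟨hp, hq⟩
      · -- g0 > 0, g1 < 0 : H ∈ A \ B
        right
        constructor
        · rw [mem_meets_segment', ← hgo, ← hg0]; nlinarith
        · rw [mem_meets_segment', ← hgo, ← hg1]; push_neg; nlinarith
      · left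
        constructor
        · rw [mem_meets_segment', ← hgo, ← hg1]; nlinarith
        · rw [mem_meets_segment', ← hgo, ← hg0]; push_neg; nlinarith
    · rcases mul_neg_iff.mp hsep' with ⟨hp, hq⟩ | ⟨hp, hq⟩
      · left
        constructor
        · rw [mem_meets_segment', ← hgo, ← hg1]; nlinarith
        · rw [mem_meets_segment', ← hgo, ← hg0]; push_neg; nlinarith
      · right
        constructor
        · rw [mem_meets_segment', ← hgo, ← hg0]; nlinarith
        · rw [mem_meets_segment', ← hgo, ← hg1]; push_neg; nlinarith


lemma integrableOn_nrm (ν : Measure (Hyp n)) (o : Euc n) {S : Set (Hyp n)}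
    (hS : MeasurableSet S) (hfin : ν S < ⊤) : IntegrableOn (nrm o) S ν := by
  haveI : IsFiniteMeasure (ν.restrict S) := ⟨by rwa [Measure.restrict_apply_univ]⟩
  apply Integrable.mono' (integrable_const (1:ℝ)) (measurable_nrm o).aestronglyMeasurable
  filter_upwards with H
  rw [norm_nrm]

lemma integrableOn_nrm_coord (ν : Measure (Hyp n)) (o : Euc n) (i : Fin n) {S : Set (Hyp n)}
    (hS : MeasurableSet S) (hfin : ν S < ⊤) :
    IntegrableOn (fun H : Hyp n => (nrm o H) i) S ν :=
  (EuclideanSpace.proj (𝕜 := ℝ) i).integrable_comp (integrableOn_nrm ν o hS hfin)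

lemma integrableOn_habs (ν : Measure (Hyp n)) (i : Fin n) {S : Set (Hyp n)}
    (hS : MeasurableSet S) (hfin : ν S < ⊤) :
    IntegrableOn (fun H : Hyp n => |H.1.1 i|) S ν := by
  haveI : IsFiniteMeasure (ν.restrict S) := ⟨by rwa [Measure.restrict_apply_univ]⟩
  apply Integrable.mono' (integrable_const (1:ℝ)) (cont_coord i).abs.measurable.aestronglyMeasurable
  filter_upwards with H
  rw [Real.norm_eq_abs, abs_abs]
  calc |H.1.1 i| ≤ ‖H.1.1‖ := abs_coord_le_norm _ i
    _ = 1 := H.2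

set_option maxHeartbeats 2000000 in
lemma core (ν : Measure (Hyp n)) (o w0 : Euc n) (a : ℝ) (ha : 0 < a) (i : Fin n)
    (w1 : Euc n) (hw1 : w1 = upd w0 i (w0 i + a))
    (hA : ν (meets (segment ℝ o w0)) < ⊤) (hB : ν (meets (segment ℝ o w1)) < ⊤)
    (hN : ν (meets {o} ∪ meets {w0} ∪ meets {w1}) = 0)
    (G : Set (Hyp n)) (hGm : MeasurableSet G) (hGfin : ν G < ⊤)
    (hGsub : G ⊆ {H : Hyp n | Separates H w0 w1} ∩ {H : Hyp n | 1/Real.sqrt n ≤ |H.1.1 i|}) :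
    (1 / Real.sqrt n) * (ν G).toReal ≤ (fnu ν o w1) i - (fnu ν o w0) i := by
  set A := meets (segment ℝ o w0) with hAdef
  set B := meets (segment ℝ o w1) with hBdef
  have hAm : MeasurableSet A := meas_meets_seg o w0
  have hBm : MeasurableSet B := meas_meets_seg o w1
  set N : Set (Hyp n) := meets {o} ∪ meets {w0} ∪ meets {w1} with hNdef
  have hNm : MeasurableSet N :=
    ((meas_meets_single o).union (meas_meets_single w0)).union (meas_meets_single w1)
  have hrel : ∀ H : Hyp n, (inner ℝ w1 H.1.1 : ℝ) = inner ℝ w0 H.1.1 + a * H.1.1 i := by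
    intro H
    rw [hw1, inner_update]
    ring
  have hNae : ∀ᵐ H ∂ν, H ∉ N := by
    rw [← MeasureTheory.measure_eq_zero_iff_ae_notMem] at *
    exact hN
  have hNmem : ∀ H : Hyp n, H ∉ N →
      ((inner ℝ o H.1.1 : ℝ) ≠ H.1.2 ∧ (inner ℝ w0 H.1.1 : ℝ) ≠ H.1.2
        ∧ (inner ℝ w1 H.1.1 : ℝ) ≠ H.1.2) := by
    intro H hH
    rw [hNdef] at hH
    simp only [Set.mem_union, not_or] at hH
    obtain ⟨⟨h1, h2⟩, h3⟩ := hH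
    exact ⟨fun hc => h1 (mem_meets_singleton'.mpr hc), fun hc => h2 (mem_meets_singleton'.mpr hc),
      fun hc => h3 (mem_meets_singleton'.mpr hc)⟩
  -- coordinate of fnu
  have hfnu : ∀ (x : Euc n), MeasurableSet (meets (segment ℝ o x)) →
      ν (meets (segment ℝ o x)) < ⊤ →
      (fnu ν o x) i = ∫ H in meets (segment ℝ o x), (nrm o H) i ∂ν := by
    intro x hm hfin
    have h := (EuclideanSpace.proj (𝕜 := ℝ) i).integral_comp_comm (integrableOn_nrm ν o hm hfin)
    rw [fnu]
    exact h.symm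
  have hfnuB := hfnu w1 hBm hB
  have hfnuA := hfnu w0 hAm hA
  -- split integrals
  have hsplitB : ∫ H in B, (nrm o H) i ∂ν
      = (∫ H in B ∩ A, (nrm o H) i ∂ν) + ∫ H in B \ A, (nrm o H) i ∂ν := by
    rw [← MeasureTheory.setIntegral_union
      (disjoint_sdiff_self_right.mono_left Set.inter_subset_right) (hBm.diff hAm)
      (integrableOn_nrm_coord ν o i (hBm.inter hAm) (lt_of_le_of_lt (measure_mono Set.inter_subset_left) hB))
      (integrableOn_nrm_coord ν o i (hBm.diff hAm) (lt_of_le_of_lt (measure_mono Set.diff_subset) hB))]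
    rw [Set.inter_union_diff]
  have hsplitA : ∫ H in A, (nrm o H) i ∂ν
      = (∫ H in A ∩ B, (nrm o H) i ∂ν) + ∫ H in A \ B, (nrm o H) i ∂ν := by
    rw [← MeasureTheory.setIntegral_union
      (disjoint_sdiff_self_right.mono_left Set.inter_subset_right) (hAm.diff hBm)
      (integrableOn_nrm_coord ν o i (hAm.inter hBm) (lt_of_le_of_lt (measure_mono Set.inter_subset_left) hA))
      (integrableOn_nrm_coord ν o i (hAm.diff hBm) (lt_of_le_of_lt (measure_mono Set.diff_subset) hA))]
    rw [Set.inter_union_diff]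
  -- replace integrands by habs
  have heqB : ∫ H in B \ A, (nrm o H) i ∂ν = ∫ H in B \ A, |H.1.1 i| ∂ν := by
    apply MeasureTheory.setIntegral_congr_ae (hBm.diff hAm)
    filter_upwards [hNae] with H hHN hHBA
    obtain ⟨h1, h2, h3⟩ := hNmem H hHN
    exact (sgn o w0 w1 a ha i H (hrel H) h1 h2 h3).1 hHBA
  have heqA : ∫ H in A \ B, (nrm o H) i ∂ν = ∫ H in A \ B, -|H.1.1 i| ∂ν := by
    apply MeasureTheory.setIntegral_congr_ae (hAm.diff hBm)
    filter_upwards [hNae] with H hHN hHAB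
    obtain ⟨h1, h2, h3⟩ := hNmem H hHN
    exact (sgn o w0 w1 a ha i H (hrel H) h1 h2 h3).2.1 hHAB
  -- combine
  have hdiff : (fnu ν o w1) i - (fnu ν o w0) i
      = (∫ H in B \ A, |H.1.1 i| ∂ν) + ∫ H in A \ B, |H.1.1 i| ∂ν := by
    rw [hfnuB, hfnuA, hsplitB, hsplitA, heqB, heqA, Set.inter_comm B A]
    rw [MeasureTheory.integral_neg]
    ring
  have hunion : (∫ H in B \ A, |H.1.1 i| ∂ν) + ∫ H in A \ B, |H.1.1 i| ∂ν
      = ∫ H in (B \ A) ∪ (A \ B), |H.1.1 i| ∂ν := by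
    rw [← MeasureTheory.setIntegral_union (disjoint_sdiff_sdiff) (hAm.diff hBm)
      (integrableOn_habs ν i (hBm.diff hAm) (lt_of_le_of_lt (measure_mono Set.diff_subset) hB))
      (integrableOn_habs ν i (hAm.diff hBm) (lt_of_le_of_lt (measure_mono Set.diff_subset) hA))]
  -- lower bound via G
  set G' : Set (Hyp n) := G \ N with hG'def
  have hG'm : MeasurableSet G' := hGm.diff hNm
  have hG'fin : ν G' < ⊤ := lt_of_le_of_lt (measure_mono Set.diff_subset) hGfin
  have hG'sub : G' ⊆ (B \ A) ∪ (A \ B) := by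
    rintro H ⟨hHG, hHN⟩
    obtain ⟨h1, h2, h3⟩ := hNmem H hHN
    exact (sgn o w0 w1 a ha i H (hrel H) h1 h2 h3).2.2 (hGsub hHG).1
  have hmono : ∫ H in G', |H.1.1 i| ∂ν ≤ ∫ H in (B \ A) ∪ (A \ B), |H.1.1 i| ∂ν := by
    apply MeasureTheory.setIntegral_mono_set
    · exact (integrableOn_habs ν i ((hBm.diff hAm).union (hAm.diff hBm))
        (lt_of_le_of_lt (measure_union_le _ _)
          (ENNReal.add_lt_top.mpr ⟨lt_of_le_of_lt (measure_mono Set.diff_subset) hB,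
            lt_of_le_of_lt (measure_mono Set.diff_subset) hA⟩)))
    · filter_upwards with H
      positivity
    · exact HasSubset.Subset.eventuallyLE hG'sub
  have hconst : (1 / Real.sqrt n) * (ν G').toReal ≤ ∫ H in G', |H.1.1 i| ∂ν := by
    refine (le_of_eq ?_).trans (MeasureTheory.setIntegral_ge_of_const_le (c := 1 / Real.sqrt n) hG'm hG'fin.ne ?_ ?_)
    · rw [smul_eq_mul, mul_comm]; rfl
    · intro H hH
      exact (hGsub hH.1).2
    · exact integrableOn_habs ν i hG'm hG'fin
  have hG'eq : ν G' = ν G := by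
    rw [hG'def]
    exact measure_diff_null hN
  rw [hG'eq] at hconst
  rw [hdiff, hunion]
  linarith


lemma isCompact_cube (b : Euc n) (a : ℝ) : IsCompact (cube b a) := by
  apply Metric.isCompact_of_isClosed_isBounded
  · have h : cube b a = ⋂ j, (⇑(EuclideanSpace.proj (𝕜 := ℝ) j)) ⁻¹' Icc (b j) (b j + a) := by
      ext z
      simp only [Set.mem_iInter, Set.mem_preimage]
      exact Iff.rfl
    rw [h]
    exact isClosed_iInter fun j =>
      IsClosed.preimage (EuclideanSpace.proj (𝕜 := ℝ) j).continuous isClosed_Icc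
  · rw [Metric.isBounded_iff_subset_closedBall 0]
    refine ⟨Real.sqrt n * (‖b‖ + |a|), fun z hz => ?_⟩
    have hC : (0:ℝ) ≤ ‖b‖ + |a| := by positivity
    simp only [Metric.mem_closedBall, dist_zero_right]
    rw [EuclideanSpace.norm_eq]
    have hterm : ∀ j, ‖z j‖ ^ 2 ≤ (‖b‖ + |a|) ^ 2 := by
      intro j
      have h1 := (hz j).1
      have h2 := (hz j).2
      have hb := abs_coord_le_norm b j
      have habs : |z j| ≤ ‖b‖ + |a| := by
        rw [abs_le]
        constructor
        · have := neg_abs_le (b j); have := le_abs_self a; linarith [abs_le.mp (le_refl |b j|)]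
        · have := le_abs_self (b j); have := le_abs_self a; linarith
      rw [Real.norm_eq_abs]
      exact pow_le_pow_left₀ (abs_nonneg _) habs 2
    calc Real.sqrt (∑ j, ‖z j‖ ^ 2) ≤ Real.sqrt (∑ _j : Fin n, (‖b‖ + |a|) ^ 2) :=
          Real.sqrt_le_sqrt (Finset.sum_le_sum fun j _ => hterm j)
      _ = Real.sqrt (n * (‖b‖ + |a|) ^ 2) := by rw [Finset.sum_const]; simp [mul_comm]
      _ ≤ Real.sqrt n * (‖b‖ + |a|) := by
          rw [Real.sqrt_mul (by positivity), Real.sqrt_sq hC]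

lemma meets_mono {A B : Set (Euc n)} (h : A ⊆ B) : meets A ⊆ meets B := by
  rintro H ⟨z, hz1, hz2⟩
  exact ⟨z, hz1, h hz2⟩

end Aux14

open Aux14 in
/-- with `c = 4⁻ⁿ n^{-1/2}`, for every cube `Q ⊆ Ω`,
`diam f_ν(Q) ≥ c · diam_ν Q` (stated via `d_ν(p,q) ` for all pairs `p, q ∈ Q`). -/
theorem stmt14 (n : ℕ) (hn : 2 ≤ n) (Ω : Set (Euc n)) (hΩo : IsOpen Ω) (hΩne : Ω.Nonempty)
    (hΩc : Convex ℝ Ω) (ν : Measure (Hyp n))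
    (hpt : ∀ p ∈ Ω, ν (meets {p}) = 0)
    (hseg : ∀ x ∈ Ω, ∀ y ∈ Ω, x ≠ y → 0 < ν (meets (segment ℝ x y)))
    (hcpt : ∀ K ⊆ Ω, IsCompact K → ν (meets K) < ⊤)
    (o : Euc n) (ho : o ∈ Ω) :
    ∀ (b : Euc n) (a : ℝ), 0 < a → cube b a ⊆ Ω →
      ∀ p ∈ cube b a, ∀ q ∈ cube b a,
        (1 / (4 ^ n * Real.sqrt n)) * (ν (meets (segment ℝ p q))).toReal ≤
          Metric.diam (fnu ν o '' cube b a) := by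
  intro b a ha hQsub p hp q hq
  have hn0 : 0 < n := by omega
  set S := segment ℝ p q with hSdef
  have hSsubQ : S ⊆ cube b a := (convex_cube b a).segment_subset hp hq
  have hScompact : IsCompact S := by
    rw [hSdef, segment_eq_image]
    exact (isCompact_Icc).image (by fun_prop)
  have hSfin : ν (meets S) < ⊤ := hcpt S (hSsubQ.trans hQsub) hScompact
  set D := (ν (meets S)).toReal with hDdef
  have hsqpos : 0 < Real.sqrt n := Real.sqrt_pos.mpr (by positivity)
  -- boundedness of the image
  set K : Set (Euc n) :=
    (fun r : ℝ × Euc n => (1 - r.1) • o + r.1 • r.2) '' (Icc (0:ℝ) 1 ×ˢ cube b a) with hKdef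
  have hKcompact : IsCompact K :=
    (isCompact_Icc.prod (isCompact_cube b a)).image (by fun_prop)
  have hKsub : K ⊆ Ω := by
    rintro - ⟨⟨t, z⟩, ⟨ht, hz⟩, rfl⟩
    exact hΩc ho (hQsub hz) (by simp at ht ⊢; linarith [ht.2]) ht.1 (by ring)
  have hKfin : ν (meets K) < ⊤ := hcpt K hKsub hKcompact
  have hsegsubK : ∀ z ∈ cube b a, segment ℝ o z ⊆ K := by
    intro z hz w hw
    rw [segment_eq_image] at hw
    obtain ⟨t, ht, rfl⟩ := hw
    exact ⟨⟨t, z⟩, ⟨ht, hz⟩, rfl⟩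
  have hbnd : ∀ z ∈ cube b a, ‖fnu ν o z‖ ≤ (ν (meets K)).toReal := by
    intro z hz
    have hm : MeasurableSet (meets (segment ℝ o z)) := meas_meets_seg o z
    have hfin : ν (meets (segment ℝ o z)) < ⊤ :=
      lt_of_le_of_lt (measure_mono (meets_mono (hsegsubK z hz))) hKfin
    calc ‖fnu ν o z‖ ≤ ∫ H in meets (segment ℝ o z), ‖nrm o H‖ ∂ν :=
          norm_integral_le_integral_norm _
      _ = ∫ H in meets (segment ℝ o z), (1:ℝ) ∂ν := by
          apply setIntegral_congr_fun hm
          intro H _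
          exact norm_nrm o H
      _ = (ν (meets (segment ℝ o z))).toReal := by
          rw [setIntegral_const]; simp; rfl
      _ ≤ (ν (meets K)).toReal :=
          ENNReal.toReal_mono hKfin.ne (measure_mono (meets_mono (hsegsubK z hz)))
  have himgbdd : Bornology.IsBounded (fnu ν o '' cube b a) := by
    rw [isBounded_iff_forall_norm_le]
    exact ⟨(ν (meets K)).toReal, by rintro - ⟨z, hz, rfl⟩; exact hbnd z hz⟩
  -- the covering family
  set Gset : (Fin n × (Fin n → Bool)) → Set (Hyp n) := fun k =>
    ({H : Hyp n | Separates H (vx b a (Function.update k.2 k.1 false))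
        (vx b a (Function.update k.2 k.1 true))} ∩
      {H : Hyp n | 1 / Real.sqrt n ≤ |H.1.1 k.1|}) ∩ meets S with hGsetdef
  have hGm : ∀ k, MeasurableSet (Gset k) := fun k =>
    ((meas_sep _ _).inter (meas_coordbd _ _)).inter (meas_meets_seg p q)
  have hGsub : ∀ k, Gset k ⊆ meets S := fun k => Set.inter_subset_right
  have hGfin : ∀ k, ν (Gset k) < ⊤ := fun k => lt_of_le_of_lt (measure_mono (hGsub k)) hSfin
  set Nv : Set (Hyp n) := ⋃ s : Fin n → Bool, meets {vx b a s} with hNvdef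
  have hNv : ν Nv = 0 :=
    measure_iUnion_null fun s => hpt _ (hQsub (vx_mem_cube ha.le s))
  have hcover : meets S ⊆ (⋃ k, Gset k) ∪ Nv := by
    intro H hH
    by_cases hv : ∀ s : Fin n → Bool, (inner ℝ (vx b a s) H.1.1 : ℝ) ≠ H.1.2
    · left
      obtain ⟨z, hz1, hz2⟩ := id hH
      obtain ⟨i, s, h1, h2⟩ := cov b a ha hn0 H z (hSsubQ hz2) hz1 hv
      exact Set.mem_iUnion.mpr ⟨(i, s), ⟨⟨h2, h1⟩, hH⟩⟩
    · right
      push_neg at hv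
      obtain ⟨s, hs⟩ := hv
      exact Set.mem_iUnion.mpr ⟨s, mem_meets_singleton'.mpr hs⟩
  -- pigeonhole
  have hmeasle : ν (meets S) ≤ ∑ k : Fin n × (Fin n → Bool), ν (Gset k) := by
    calc ν (meets S) ≤ ν ((⋃ k, Gset k) ∪ Nv) := measure_mono hcover
      _ ≤ ν (⋃ k, Gset k) + ν Nv := measure_union_le _ _
      _ = ν (⋃ k, Gset k) := by rw [hNv, add_zero]
      _ ≤ ∑' k, ν (Gset k) := measure_iUnion_le _
      _ = ∑ k : Fin n × (Fin n → Bool), ν (Gset k) := tsum_fintype _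
  have hDle : D ≤ ∑ k : Fin n × (Fin n → Bool), (ν (Gset k)).toReal := by
    have hne : ∀ k ∈ Finset.univ, ν (Gset k) ≠ ⊤ := fun k _ => (hGfin k).ne
    rw [hDdef, ← ENNReal.toReal_sum hne]
    have hsumfin : (∑ k : Fin n × (Fin n → Bool), ν (Gset k)) ≠ ⊤ := by
      rw [← lt_top_iff_ne_top]
      exact ENNReal.sum_lt_top.mpr fun k _ => hGfin k
    exact ENNReal.toReal_mono hsumfin hmeasle
  have hcard : (Fintype.card (Fin n × (Fin n → Bool)) : ℝ) = n * 2 ^ n := by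
    rw [Fintype.card_prod, Fintype.card_fun]
    simp
  have hpigeon : ∃ k : Fin n × (Fin n → Bool), D / (n * 2 ^ n) ≤ (ν (Gset k)).toReal := by
    by_contra hno
    push_neg at hno
    haveI : Nonempty (Fin n) := ⟨⟨0, hn0⟩⟩
    have hlt : ∑ k : Fin n × (Fin n → Bool), (ν (Gset k)).toReal
        < ∑ _k : Fin n × (Fin n → Bool), D / (n * 2 ^ n) := by
      apply Finset.sum_lt_sum_of_nonempty
      · exact Finset.univ_nonempty
      · exact fun k _ => hno k
    rw [Finset.sum_const, Finset.card_univ, nsmul_eq_mul, hcard] at hlt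
    have hmul : (n : ℝ) * 2 ^ n * (D / (n * 2 ^ n)) = D := by
      field_simp
    linarith
  obtain ⟨⟨i, s⟩, hk⟩ := hpigeon
  -- the chosen edge
  set w0 := vx b a (Function.update s i false) with hw0def
  set w1 := vx b a (Function.update s i true) with hw1def
  have hw0Q : w0 ∈ cube b a := vx_mem_cube ha.le _
  have hw1Q : w1 ∈ cube b a := vx_mem_cube ha.le _
  have hw0i : w0 i = b i := by
    show b i + _ = b i
    simp [Function.update_self]
  have hw1eq : w1 = upd w0 i (w0 i + a) := by
    ext j
    rw [upd_apply]
    by_cases hij : j = i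
    · rw [if_pos hij, hij, hw0i]
      show b i + _ = b i + a
      simp [Function.update_self]
    · rw [if_neg hij]
      show b j + _ = b j + _
      simp [Function.update_of_ne hij]
  have hsegfin : ∀ z ∈ cube b a, ν (meets (segment ℝ o z)) < ⊤ := fun z hz =>
    lt_of_le_of_lt (measure_mono (meets_mono (hsegsubK z hz))) hKfin
  have hNnull : ν (meets {o} ∪ meets {w0} ∪ meets {w1}) = 0 := by
    apply measure_union_null
    · exact measure_union_null (hpt o ho) (hpt w0 (hQsub hw0Q))
    · exact hpt w1 (hQsub hw1Q)
  have hGsub2 : Gset (i, s) ⊆ {H : Hyp n | Separates H w0 w1} ∩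
      {H : Hyp n | 1 / Real.sqrt n ≤ |H.1.1 i|} := Set.inter_subset_left
  have hcore := core ν o w0 a ha i w1 hw1eq (hsegfin w0 hw0Q) (hsegfin w1 hw1Q) hNnull
    (Gset (i, s)) (hGm (i, s)) (hGfin (i, s)) hGsub2
  -- diameter bound
  have hdiam : (fnu ν o w1) i - (fnu ν o w0) i ≤ Metric.diam (fnu ν o '' cube b a) := by
    have h1 : (fnu ν o w1) i - (fnu ν o w0) i = (fnu ν o w1 - fnu ν o w0) i := by
      rw [PiLp.sub_apply]
    have h2 : (fnu ν o w1 - fnu ν o w0) i ≤ ‖fnu ν o w1 - fnu ν o w0‖ :=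
      le_trans (le_abs_self _) (abs_coord_le_norm _ i)
    have h3 : ‖fnu ν o w1 - fnu ν o w0‖ = dist (fnu ν o w1) (fnu ν o w0) :=
      (dist_eq_norm _ _).symm
    have h4 : dist (fnu ν o w1) (fnu ν o w0) ≤ Metric.diam (fnu ν o '' cube b a) :=
      Metric.dist_le_diam_of_mem himgbdd ⟨w1, hw1Q, rfl⟩ ⟨w0, hw0Q, rfl⟩
    linarith
  -- final numeric chain
  have hn2 : (n : ℝ) ≤ 2 ^ n := by
    exact_mod_cast (Nat.lt_two_pow_self (n := n)).le
  have h2pos : (0:ℝ) < 2 ^ n := by positivity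
  have hnum : 1 / ((4:ℝ) ^ n * Real.sqrt n) * D ≤ (1 / Real.sqrt n) * (D / (n * 2 ^ n)) := by
    have hDpos : 0 ≤ D := ENNReal.toReal_nonneg
    have h4 : ((4:ℝ) ^ n) = 2 ^ n * 2 ^ n := by
      rw [← mul_pow]; norm_num
    have hle : Real.sqrt n * ((n:ℝ) * 2 ^ n) ≤ 4 ^ n * Real.sqrt n := by
      rw [h4]
      have h5 : (n:ℝ) * 2 ^ n ≤ 2 ^ n * 2 ^ n :=
        mul_le_mul_of_nonneg_right hn2 h2pos.le
      nlinarith [mul_le_mul_of_nonneg_left h5 hsqpos.le]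
    have hp1 : (0:ℝ) < Real.sqrt n * ((n:ℝ) * 2 ^ n) := by positivity
    have key : 1 / ((4:ℝ) ^ n * Real.sqrt n) ≤ 1 / (Real.sqrt n * ((n:ℝ) * 2 ^ n)) :=
      one_div_le_one_div_of_le hp1 hle
    calc 1 / ((4:ℝ) ^ n * Real.sqrt n) * D ≤ 1 / (Real.sqrt n * ((n:ℝ) * 2 ^ n)) * D :=
          mul_le_mul_of_nonneg_right key hDpos
      _ = (1 / Real.sqrt n) * (D / (n * 2 ^ n)) := by
          field_simp
  have hfinal : (1 / Real.sqrt n) * (D / (n * 2 ^ n)) ≤ (1 / Real.sqrt n) * (ν (Gset (i, s))).toReal :=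
    mul_le_mul_of_nonneg_left hk (by positivity)
  calc 1 / (4 ^ n * Real.sqrt n) * D ≤ (1 / Real.sqrt n) * (D / (n * 2 ^ n)) := hnum
    _ ≤ (1 / Real.sqrt n) * (ν (Gset (i, s))).toReal := hfinal
    _ ≤ (fnu ν o w1) i - (fnu ν o w0) i := hcore
    _ ≤ Metric.diam (fnu ν o '' cube b a) := hdiam
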